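/- Let S and O be nonempty finite sets with |S| ≥ 2 and let C be a channel from S to O. Then C is (0, δ)-LDP with δ = 1 − β*(C): for all a, b ∈ S and every subset O' ⊆ O, one has ∑_{o ∈ O'} (C a o − C b o) ≤ 1 − β*(C). -/

import Mathlib

/-- A channel from secrets `S` to outputs `O`: nonnegative entries, rows sum to 1. -/
def IsChannel {S O : Type*} [Fintype O] (C : S → O → ℝ) : Prop :=
  (∀ s o, 0 ≤ C s o) ∧ ∀ s, ∑ o, C s o = 1

/-- A prior on `S`: nonnegative, sums to 1. -/
def IsPrior {S : Type*} [Fintype S] (π : S → ℝ) : Prop :=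
  (∀ s, 0 ≤ π s) ∧ ∑ s, π s = 1

/-- Bayes risk `R*(π, C) = 1 − ∑_o max_s (π s · C s o)`. -/
noncomputable def bayesRisk {S O : Type*} [Fintype S] [Nonempty S] [Fintype O]
    (π : S → ℝ) (C : S → O → ℝ) : ℝ :=
  1 - ∑ o, Finset.univ.sup' Finset.univ_nonempty (fun s => π s * C s o)

/-- Guessing error `G(π) = 1 − max_s π s`. -/
noncomputable def guessErr {S : Type*} [Fintype S] [Nonempty S] (π : S → ℝ) : ℝ :=
  1 - Finset.univ.sup' Finset.univ_nonempty π

/-- Multiplicative Bayes risk leakage `β(π, C) = R*(π, C) / G(π)`. -/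
noncomputable def betaL {S O : Type*} [Fintype S] [Nonempty S] [Fintype O]
    (π : S → ℝ) (C : S → O → ℝ) : ℝ :=
  bayesRisk π C / guessErr π

/-- The prior `π_{ab}` assigning 1/2 to each of `a` and `b` and 0 elsewhere. -/
noncomputable def pairPrior {S : Type*} [DecidableEq S] (a b : S) : S → ℝ :=
  fun s => if s = a ∨ s = b then 1 / 2 else 0

/-- Bayes security `β*(C)`: the minimum of `β(π_{ab}, C)` over distinct pairs `a ≠ b`. -/
noncomputable def betaStar {S O : Type*} [Fintype S] [Nonempty S] [DecidableEq S] [Fintype O]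
    (C : S → O → ℝ) (h : 1 < Fintype.card S) : ℝ :=
  (Finset.univ.filter (fun p : S × S => p.1 ≠ p.2)).inf'
    (by
      obtain ⟨a, b, hab⟩ := Fintype.exists_pair_of_one_lt_card h
      exact ⟨(a, b), by simp [hab]⟩)
    (fun p => betaL (pairPrior p.1 p.2) C)

lemma betaL_pair_le {S O : Type*} [Fintype S] [Nonempty S] [DecidableEq S] [Fintype O]
    (C : S → O → ℝ) (hC : IsChannel C) (a b : S) :
    betaL (pairPrior a b) C ≤ 2 - ∑ o, max (C a o) (C b o) := by
  have hsup : Finset.univ.sup' Finset.univ_nonempty (pairPrior a b) = 1/2 := by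
    apply le_antisymm
    · apply Finset.sup'_le
      intro s _
      unfold pairPrior; split_ifs <;> norm_num
    · calc (1:ℝ)/2 = pairPrior a b a := by simp [pairPrior]
        _ ≤ _ := Finset.le_sup' _ (Finset.mem_univ a)
  have hge : ∀ o, (1/2 : ℝ) * max (C a o) (C b o) ≤
      Finset.univ.sup' Finset.univ_nonempty (fun s => pairPrior a b s * C s o) := by
    intro o
    have ha : (1/2:ℝ) * C a o ≤
        Finset.univ.sup' Finset.univ_nonempty (fun s => pairPrior a b s * C s o) := by
      have := Finset.le_sup' (fun s => pairPrior a b s * C s o) (Finset.mem_univ a)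
      exact le_trans (by simp [pairPrior]) this
    have hb : (1/2:ℝ) * C b o ≤
        Finset.univ.sup' Finset.univ_nonempty (fun s => pairPrior a b s * C s o) := by
      have := Finset.le_sup' (fun s => pairPrior a b s * C s o) (Finset.mem_univ b)
      exact le_trans (by simp [pairPrior]) this
    rcases le_total (C a o) (C b o) with h | h
    · rw [max_eq_right h]; exact hb
    · rw [max_eq_left h]; exact ha
  have hsum : (1/2 : ℝ) * ∑ o, max (C a o) (C b o) ≤
      ∑ o, Finset.univ.sup' Finset.univ_nonempty (fun s => pairPrior a b s * C s o) := by
    rw [Finset.mul_sum]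
    exact Finset.sum_le_sum fun o _ => hge o
  unfold betaL bayesRisk guessErr
  rw [hsup]
  rw [div_le_iff₀ (by norm_num : (0:ℝ) < 1 - 1/2)]
  ring_nf
  ring_nf at hsum
  linarith

lemma sum_max_sub_one {S O : Type*} [Fintype O] (C : S → O → ℝ) (hC : IsChannel C)
    (a b : S) (O' : Finset O) :
    ∑ o ∈ O', (C a o - C b o) ≤ (∑ o, max (C a o) (C b o)) - 1 := by
  have h1 : ∑ o ∈ O', (C a o - C b o) ≤ ∑ o, (max (C a o) (C b o) - C b o) := by
    calc ∑ o ∈ O', (C a o - C b o) ≤ ∑ o ∈ O', (max (C a o) (C b o) - C b o) :=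
          Finset.sum_le_sum fun o _ => by have := le_max_left (C a o) (C b o); linarith
      _ ≤ ∑ o, (max (C a o) (C b o) - C b o) := by
          apply Finset.sum_le_sum_of_subset_of_nonneg (Finset.subset_univ O')
          intro o _ _; have := le_max_right (C a o) (C b o); linarith
  have h2 : ∑ o, (max (C a o) (C b o) - C b o) =
      (∑ o, max (C a o) (C b o)) - 1 := by
    rw [Finset.sum_sub_distrib, hC.2 b]
  linarith

/-- a `β*`-secure channel is `(0, δ)`-LDP with `δ = 1 − β*(C)`:
for all secrets `a, b` and every subset `O'` of outputs,
`∑_{o ∈ O'} (C a o − C b o) ≤ 1 − β*(C)`. -/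
theorem betaStar_zero_delta_LDP {S O : Type*} [Fintype S] [Nonempty S] [DecidableEq S]
    [Fintype O] [Nonempty O]
    (hS : 1 < Fintype.card S) (C : S → O → ℝ) (hC : IsChannel C)
    (a b : S) (O' : Finset O) :
    ∑ o ∈ O', (C a o - C b o) ≤ 1 - betaStar C hS := by
  by_cases hab : a = b
  · subst hab
    obtain ⟨x, y, hxy⟩ := Fintype.exists_pair_of_one_lt_card hS
    have h := betaL_pair_le C hC x y
    have hx : ∑ o, C x o ≤ ∑ o, max (C x o) (C y o) :=
      Finset.sum_le_sum fun o _ => le_max_left _ _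
    rw [hC.2 x] at hx
    have hbs : betaStar C hS ≤ betaL (pairPrior x y) C := by
      have hmem : (x, y) ∈ Finset.univ.filter (fun p : S × S => p.1 ≠ p.2) :=
        Finset.mem_filter.2 ⟨Finset.mem_univ _, hxy⟩
      exact Finset.inf'_le (fun p : S × S => betaL (pairPrior p.1 p.2) C) hmem
    have hz : ∑ o ∈ O', (C a o - C a o) = 0 := by simp
    linarith
  · have hbs : betaStar C hS ≤ betaL (pairPrior a b) C := by
      have hmem : (a, b) ∈ Finset.univ.filter (fun p : S × S => p.1 ≠ p.2) :=
        Finset.mem_filter.2 ⟨Finset.mem_univ _, hab⟩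
      exact Finset.inf'_le (fun p : S × S => betaL (pairPrior p.1 p.2) C) hmem
    have h := betaL_pair_le C hC a b
    have h2 := sum_max_sub_one C hC a b O'
    linarith
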